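/- Let m ≤ n be natural numbers, let π be a permutation of 2^m, and let f be a finite partial injection from 2^ω to 2^ω such that: (a) f(a)↾m = π(a↾m) for every a ∈ dom(f); (b) the map a ↦ a↾(n+1) is injective on dom(f) and the map b ↦ b↾(n+1) is injective on ran(f); and (c) a(n) = 0 and f(a)(n) = 0 for every a ∈ dom(f). Then there exists a permutation π' of 2^{n+1} such that π'(t)↾m = π(t↾m) for every t ∈ 2^{n+1}, π'(t)(n) = t(n) for every t ∈ 2^{n+1}, and π'(a↾(n+1)) = f(a)↾(n+1) for every a ∈ dom(f). -/
import Mathlib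

/-- the key density step for Medini's forcing `𝕄_{A,B}`.  Given
`m ≤ n`, a permutation `π` of `2^m` and a finite partial injection `f` of `2^ω`
respecting `π`, whose domain and range are separated by restriction to `n+1`
and avoid bit `n`, there is a permutation `π'` of `2^(n+1)` extending `π`,
preserving bit `n`, and compatible with `f`. -/
theorem stmt13 (m n : ℕ) (hmn : m ≤ n)
    (π : Equiv.Perm (Fin m → Bool))
    (D : Set (ℕ → Bool)) (hD : D.Finite)
    (f : (ℕ → Bool) → (ℕ → Bool)) (hfinj : Set.InjOn f D)
    (ha : ∀ a ∈ D,
      (fun i : Fin m => f a i.val) = π (fun i : Fin m => a i.val))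
    (hb1 : Set.InjOn (fun a : ℕ → Bool => (fun i : Fin (n + 1) => a i.val)) D)
    (hb2 : Set.InjOn (fun b : ℕ → Bool => (fun i : Fin (n + 1) => b i.val)) (f '' D))
    (hc : ∀ a ∈ D, a n = false ∧ f a n = false) :
    ∃ π' : Equiv.Perm (Fin (n + 1) → Bool),
      (∀ t : Fin (n + 1) → Bool,
        (fun i : Fin m => π' t (Fin.castLE (Nat.le_succ_of_le hmn) i)) =
          π (fun i : Fin m => t (Fin.castLE (Nat.le_succ_of_le hmn) i))) ∧
      (∀ t : Fin (n + 1) → Bool, π' t (Fin.last n) = t (Fin.last n)) ∧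
      (∀ a ∈ D,
        π' (fun i : Fin (n + 1) => a i.val) = (fun i : Fin (n + 1) => f a i.val)) := by
  classical
  set X := (Fin (n + 1) → Bool) with hX
  let low : X → (Fin m → Bool) := fun t i => t (Fin.castLE (Nat.le_succ_of_le hmn) i)
  let c : X → (Fin m → Bool) × Bool := fun t => (low t, t (Fin.last n))
  -- the base permutation σ
  let sf : X → X := fun t i => if h : (i : ℕ) < m then π (low t) ⟨i, h⟩ else t i
  let sg : X → X := fun t i => if h : (i : ℕ) < m then π.symm (low t) ⟨i, h⟩ else t i
  have hlowsf : ∀ t, low (sf t) = π (low t) := by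
    intro t
    funext j
    show sf t (Fin.castLE _ j) = _
    have hj : ((Fin.castLE (Nat.le_succ_of_le hmn) j : Fin (n+1)) : ℕ) < m := j.2
    simp only [sf, dif_pos hj]
    congr 1
  have hlowsg : ∀ t, low (sg t) = π.symm (low t) := by
    intro t
    funext j
    show sg t (Fin.castLE _ j) = _
    have hj : ((Fin.castLE (Nat.le_succ_of_le hmn) j : Fin (n+1)) : ℕ) < m := j.2
    simp only [sg, dif_pos hj]
    congr 1
  have hsgsf : ∀ t, sg (sf t) = t := by
    intro t
    funext i
    show sg (sf t) i = t i
    by_cases h : (i : ℕ) < m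
    · simp only [sg, dif_pos h, hlowsf, Equiv.symm_apply_apply]
      show low t ⟨(i : ℕ), h⟩ = t i
      exact congrArg t (Fin.ext rfl)
    · simp only [sg, sf, dif_neg h]
  have hsfsg : ∀ t, sf (sg t) = t := by
    intro t
    funext i
    show sf (sg t) i = t i
    by_cases h : (i : ℕ) < m
    · simp only [sf, dif_pos h, hlowsg, Equiv.apply_symm_apply]
      show low t ⟨(i : ℕ), h⟩ = t i
      exact congrArg t (Fin.ext rfl)
    · simp only [sg, sf, dif_neg h]
  let σ : Equiv.Perm X := ⟨sf, sg, hsgsf, hsfsg⟩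
  have hlastσ : ∀ t : X, σ t (Fin.last n) = t (Fin.last n) := by
    intro t
    show sf t (Fin.last n) = t (Fin.last n)
    have : ¬ ((Fin.last n : Fin (n+1)) : ℕ) < m := by
      simp [Fin.last, Nat.not_lt.mpr hmn]
    simp only [sf, dif_neg this]
  have hlastσs : ∀ t : X, σ.symm t (Fin.last n) = t (Fin.last n) := by
    intro t
    show sg t (Fin.last n) = t (Fin.last n)
    have : ¬ ((Fin.last n : Fin (n+1)) : ℕ) < m := by
      simp [Fin.last, Nat.not_lt.mpr hmn]
    simp only [sg, dif_neg this]
  -- the two partial maps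
  let R : (ℕ → Bool) → X := fun a i => a i.val
  let u : (ℕ → Bool) → X := R
  let v : (ℕ → Bool) → X := fun a => σ.symm (R (f a))
  have hlowR : ∀ a, low (R a) = fun i : Fin m => a i.val := by
    intro a; funext i; rfl
  have hcuv : ∀ a ∈ D, c (u a) = c (v a) := by
    intro a haD
    have h1 : low (v a) = low (u a) := by
      show low (sg (R (f a))) = low (R a)
      rw [hlowsg, hlowR, hlowR, ha a haD, Equiv.symm_apply_apply]
    have h2 : v a (Fin.last n) = u a (Fin.last n) := by
      show σ.symm (R (f a)) (Fin.last n) = R a (Fin.last n)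
      rw [hlastσs]
      show f a n = a n
      rw [(hc a haD).1, (hc a haD).2]
    simp only [c, h1, h2]
  have huinj : Set.InjOn u D := hb1
  have hvinj : Set.InjOn v D := by
    intro a haD a' ha'D h
    have : R (f a) = R (f a') := σ.symm.injective h
    exact hfinj haD ha'D (hb2 ⟨a, haD, rfl⟩ ⟨a', ha'D, rfl⟩ this)
  -- fiberwise correction permutation
  let Y := (Fin m → Bool) × Bool
  let F : Y → Type := fun y => { t : X // c t = y }
  have : ∀ y, Finite (F y) := fun y => Subtype.finite
  let p : ∀ y : Y, F y → Prop := fun y z => z.val ∈ u '' D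
  let q : ∀ y : Y, F y → Prop := fun y z => z.val ∈ v '' D
  have key : ∀ y : Y, ∃ e : { z : F y // p y z } ≃ { z : F y // q y z },
      ∀ a (haD : a ∈ D) (h : c (u a) = y),
        ((e ⟨⟨u a, h⟩, ⟨a, haD, rfl⟩⟩).val).val = v a := by
    intro y
    let Au := { x : ↥D // c (u x) = y }
    let Av := { x : ↥D // c (v x) = y }
    let φu : Au → { z : F y // p y z } := fun x =>
      ⟨⟨u x.1, x.2⟩, ⟨x.1.1, x.1.2, rfl⟩⟩
    let φv : Av → { z : F y // q y z } := fun x =>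
      ⟨⟨v x.1, x.2⟩, ⟨x.1.1, x.1.2, rfl⟩⟩
    have hφu : Function.Bijective φu := by
      constructor
      · intro x x' h
        have := congrArg (fun z => z.val.val) h
        have := huinj x.1.2 x'.1.2 this
        exact Subtype.ext (Subtype.ext this)
      · rintro ⟨⟨t, ht⟩, ⟨a, haD, hat⟩⟩
        refine ⟨⟨⟨a, haD⟩, ?_⟩, ?_⟩
        · show c (u a) = y
          rw [hat]; exact ht
        · exact Subtype.ext (Subtype.ext hat)
    have hφv : Function.Bijective φv := by
      constructor
      · intro x x' h
        have := congrArg (fun z => z.val.val) h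
        have := hvinj x.1.2 x'.1.2 this
        exact Subtype.ext (Subtype.ext this)
      · rintro ⟨⟨t, ht⟩, ⟨a, haD, hat⟩⟩
        refine ⟨⟨⟨a, haD⟩, ?_⟩, ?_⟩
        · show c (v a) = y
          rw [hat]; exact ht
        · exact Subtype.ext (Subtype.ext hat)
    let hAuv : Au ≃ Av := Equiv.subtypeEquivRight (fun x => by rw [hcuv x.1 x.2])
    refine ⟨((Equiv.ofBijective φu hφu).symm.trans hAuv).trans (Equiv.ofBijective φv hφv),
      ?_⟩
    intro a haD h
    have h1 : (Equiv.ofBijective φu hφu).symm ⟨⟨u a, h⟩, ⟨a, haD, rfl⟩⟩ = ⟨⟨a, haD⟩, h⟩ := by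
      rw [Equiv.symm_apply_eq]
      exact Subtype.ext (Subtype.ext rfl)
    simp only [Equiv.trans_apply, h1]
    rfl
  choose key hkey using key
  let ρ : ∀ y : Y, Equiv.Perm (F y) := fun y => Equiv.extendSubtype (key y)
  let e : (Σ y : Y, F y) ≃ X := Equiv.sigmaFiberEquiv c
  let τ : Equiv.Perm X := (e.symm.trans (Equiv.sigmaCongrRight ρ)).trans e
  have hτ : ∀ t : X, τ t = (ρ (c t) ⟨t, rfl⟩).val := by
    intro t; rfl
  have hcτ : ∀ t : X, c (τ t) = c t := by
    intro t
    rw [hτ]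
    exact (ρ (c t) ⟨t, rfl⟩).2
  have hτu : ∀ a ∈ D, τ (u a) = v a := by
    intro a haD
    rw [hτ]
    have hp : p (c (u a)) ⟨u a, rfl⟩ := ⟨a, haD, rfl⟩
    have h2 := Equiv.extendSubtype_apply_of_mem (key (c (u a))) ⟨u a, rfl⟩ hp
    show ((ρ (c (u a))) ⟨u a, rfl⟩).val = v a
    rw [show (ρ (c (u a))) ⟨u a, rfl⟩ = ((key (c (u a))) ⟨⟨u a, rfl⟩, hp⟩).val from h2]
    exact hkey (c (u a)) a haD rfl
  -- final permutation
  refine ⟨τ.trans σ, ?_, ?_, ?_⟩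
  · intro t
    show low (σ (τ t)) = π (low t)
    have : low (τ t) = low t := congrArg Prod.fst (hcτ t)
    rw [show low (σ (τ t)) = π (low (τ t)) from hlowsf (τ t), this]
  · intro t
    show σ (τ t) (Fin.last n) = t (Fin.last n)
    rw [hlastσ]
    exact congrArg Prod.snd (hcτ t)
  · intro a haD
    show σ (τ (u a)) = R (f a)
    rw [hτu a haD]
    exact σ.apply_symm_apply (R (f a))
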